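/- arXiv:1605.04029 — 3 statements merged into one kernel-verified Lean document; each statement's English description precedes it below -/
import Mathlib

section
/- Fix θ₀ > 0 and a, b > 0. For each integer m ≥ 1 let y₁, …, y_m be independent and identically distributed Poisson(θ₀) random variables and set S = ∑_{i=1}^m y_i and θ̂ = S/m. Then sup over all integers m ≥ 1 and K ≥ 1 of E[ ∫₀^∞ K m (θ − θ̂)² dGamma(K·S + a, K·m + b)(θ) ] is finite, where the outer expectation is over the Poisson data. -/
open MeasureTheory ProbabilityTheory Set Real Filter
open scoped NNReal ENNReal

lemma gammaMeasure_eq_withDensity (α r : ℝ) :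
    gammaMeasure α r = volume.withDensity
      (fun x => ((gammaPDFReal α r x).toNNReal : ℝ≥0∞)) := rfl

lemma integrableOn_pdf_mul_pow (n : ℕ) {α r : ℝ} (hα : 0 < α) (hr : 0 < r) :
    IntegrableOn (fun x : ℝ => gammaPDFReal α r x * x ^ n) (Ioi 0) := by
  have h := integrableOn_rpow_mul_exp_neg_mul_rpow (p := 1) (s := α + n - 1) (b := r)
    (by push_cast; linarith) zero_lt_one hr
  simp only [rpow_one] at h
  refine IntegrableOn.congr_fun (h.const_mul (r ^ α / Real.Gamma α))
    (fun x hx => ?_) measurableSet_Ioi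
  have hx : (0:ℝ) < x := hx
  simp only [gammaPDFReal, if_pos hx.le]
  rw [show α + (n:ℝ) - 1 = (α - 1) + n by ring, rpow_add hx, rpow_natCast]
  rw [neg_mul, ← mul_assoc]
  ring

lemma pdf_smul_eq (n : ℕ) {α r : ℝ} (hα : 0 < α) (hr : 0 < r) :
    (fun x : ℝ => (gammaPDFReal α r x).toNNReal • x ^ n)
      = fun x : ℝ => gammaPDFReal α r x * x ^ n := by
  ext x
  rw [NNReal.smul_def, smul_eq_mul, Real.coe_toNNReal _ (gammaPDFReal_nonneg hα hr x)]

lemma support_pdf_mul_pow (n : ℕ) (α r : ℝ) :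
    Function.support (fun x : ℝ => gammaPDFReal α r x * x ^ n) ⊆ Ici 0 := by
  intro x hx
  by_contra h
  exact hx (by simp [gammaPDFReal, if_neg (not_le.mpr (not_le.mp h) : ¬ (0:ℝ) ≤ x)])

lemma gamma_pow_integrable (n : ℕ) {α r : ℝ} (hα : 0 < α) (hr : 0 < r) :
    Integrable (fun x : ℝ => x ^ n) (gammaMeasure α r) := by
  rw [gammaMeasure_eq_withDensity,
    integrable_withDensity_iff_integrable_smul
      ((measurable_gammaPDFReal α r).real_toNNReal),
    pdf_smul_eq n hα hr,
    ← integrableOn_iff_integrable_of_support_subset (support_pdf_mul_pow n α r)]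
  rw [integrableOn_Ici_iff_integrableOn_Ioi]
  exact integrableOn_pdf_mul_pow n hα hr

lemma gamma_pow_integral (n : ℕ) {α r : ℝ} (hα : 0 < α) (hr : 0 < r) :
    ∫ x, x ^ n ∂(gammaMeasure α r)
      = Real.Gamma (α + n) / (Real.Gamma α * r ^ n) := by
  rw [gammaMeasure_eq_withDensity,
    integral_withDensity_eq_integral_smul
      ((measurable_gammaPDFReal α r).real_toNNReal),
    pdf_smul_eq n hα hr]
  rw [← setIntegral_eq_integral_of_forall_compl_eq_zero
      (s := Ici (0:ℝ)) (fun x hx => by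
        simp [gammaPDFReal, if_neg (not_le.mpr (not_le.mp (fun h => hx h)) : ¬ (0:ℝ) ≤ x)]),
    integral_Ici_eq_integral_Ioi]
  have : ∀ x ∈ Ioi (0:ℝ), gammaPDFReal α r x * x ^ n
      = (r ^ α / Real.Gamma α) * (x ^ (α + n - 1) * Real.exp (-(r * x))) := by
    intro x hx
    have hx : (0:ℝ) < x := hx
    simp only [gammaPDFReal, if_pos hx.le]
    rw [show α + (n:ℝ) - 1 = (α - 1) + n by ring, rpow_add hx, rpow_natCast]
    ring
  rw [setIntegral_congr_fun measurableSet_Ioi this, integral_const_mul,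
    integral_rpow_mul_exp_neg_mul_Ioi (by push_cast; linarith) hr]
  rw [div_rpow zero_le_one hr.le, one_rpow, rpow_add hr, rpow_natCast]
  have h1 : Real.Gamma α ≠ 0 := (Real.Gamma_pos_of_pos hα).ne'
  have h2 : r ^ α ≠ 0 := (rpow_pos_of_pos hr α).ne'
  field_simp

lemma gamma_id_integrable {α r : ℝ} (hα : 0 < α) (hr : 0 < r) :
    Integrable (fun x : ℝ => x) (gammaMeasure α r) := by
  simpa using gamma_pow_integrable 1 hα hr

lemma gamma_moment_one {α r : ℝ} (hα : 0 < α) (hr : 0 < r) :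
    ∫ x, x ∂(gammaMeasure α r) = α / r := by
  have h := gamma_pow_integral 1 hα hr
  simp only [pow_one] at h
  rw [h, Nat.cast_one, Real.Gamma_add_one hα.ne']
  have h1 : Real.Gamma α ≠ 0 := (Real.Gamma_pos_of_pos hα).ne'
  field_simp

lemma gamma_moment_two {α r : ℝ} (hα : 0 < α) (hr : 0 < r) :
    ∫ x, x ^ 2 ∂(gammaMeasure α r) = α * (α + 1) / r ^ 2 := by
  have h := gamma_pow_integral 2 hα hr
  rw [h, Nat.cast_ofNat, show α + 2 = (α + 1) + 1 by ring,
    Real.Gamma_add_one (by linarith), Real.Gamma_add_one hα.ne']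
  have h1 : Real.Gamma α ≠ 0 := (Real.Gamma_pos_of_pos hα).ne'
  field_simp

lemma gamma_inner (C : ℝ) {α r : ℝ} (hα : 0 < α) (hr : 0 < r) (c : ℝ) :
    ∫ θ, C * (θ - c) ^ 2 ∂(gammaMeasure α r)
      = C * (α * (α + 1) / r ^ 2 - 2 * c * (α / r) + c ^ 2) := by
  haveI := isProbabilityMeasure_gammaMeasure hα hr
  rw [MeasureTheory.integral_const_mul]
  congr 1
  have i2 := gamma_pow_integrable 2 hα hr
  have i1 := gamma_id_integrable hα hr
  have heq : (fun θ : ℝ => (θ - c) ^ 2) = fun θ : ℝ => θ ^ 2 - (2 * c) * θ + c ^ 2 := by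
    ext θ; ring
  have hmul : Integrable (fun θ : ℝ => (2 * c) * θ) (gammaMeasure α r) :=
    i1.const_mul (2 * c)
  have hsub : Integrable (fun θ : ℝ => θ ^ 2 - (2 * c) * θ) (gammaMeasure α r) :=
    i2.sub hmul
  rw [heq, integral_add hsub (integrable_const _),
    integral_sub i2 hmul, MeasureTheory.integral_const_mul,
    integral_const, gamma_moment_two hα hr, gamma_moment_one hα hr]
  simp [measure_univ]

lemma hs0 (t : ℝ) : HasSum (fun n : ℕ => t ^ n / n.factorial) (Real.exp t) := by
  rw [Real.exp_eq_exp_ℝ]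
  exact NormedSpace.expSeries_div_hasSum_exp t

lemma hs1 (t : ℝ) : HasSum (fun n : ℕ => (n : ℝ) * (t ^ n / n.factorial))
    (t * Real.exp t) := by
  refine (hasSum_nat_add_iff' 1).mp ?_
  have h : (fun n : ℕ => ((n + 1 : ℕ) : ℝ) * (t ^ (n + 1) / (n + 1).factorial))
      = fun n : ℕ => t * (t ^ n / n.factorial) := by
    ext n
    have hfac : ((n + 1).factorial : ℝ) = (n + 1) * n.factorial := by
      rw [Nat.factorial_succ]; push_cast; ring
    have hne : ((n:ℝ) + 1) ≠ 0 := by positivity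
    rw [hfac]
    push_cast
    field_simp
    ring
  rw [show (fun n : ℕ => ((n + 1 : ℕ) : ℝ) * (t ^ (n + 1) / (n + 1).factorial)) = _ from h]
  simp only [Finset.range_one, Finset.sum_singleton, Nat.cast_zero, zero_mul, sub_zero]
  exact (hs0 t).mul_left t

lemma hs2 (t : ℝ) : HasSum (fun n : ℕ => (n : ℝ) * ((n : ℝ) - 1) * (t ^ n / n.factorial))
    (t ^ 2 * Real.exp t) := by
  refine (hasSum_nat_add_iff' 2).mp ?_
  have h : (fun n : ℕ => ((n + 2 : ℕ) : ℝ) * (((n + 2 : ℕ) : ℝ) - 1) *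
      (t ^ (n + 2) / (n + 2).factorial)) = fun n : ℕ => t ^ 2 * (t ^ n / n.factorial) := by
    ext n
    have hfac : ((n + 2).factorial : ℝ) = (n + 2) * ((n + 1) * n.factorial) := by
      rw [show n + 2 = (n+1) + 1 by ring, Nat.factorial_succ, Nat.factorial_succ]
      push_cast; ring
    have h1 : ((n:ℝ) + 1) ≠ 0 := by positivity
    have h2 : ((n:ℝ) + 2) ≠ 0 := by positivity
    rw [hfac]
    push_cast
    field_simp
    ring
  rw [show (fun n : ℕ => ((n + 2 : ℕ) : ℝ) * (((n + 2 : ℕ) : ℝ) - 1) *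
      (t ^ (n + 2) / (n + 2).factorial)) = _ from h]
  have : ∑ i ∈ Finset.range 2, (i : ℝ) * ((i : ℝ) - 1) * (t ^ i / i.factorial) = 0 := by
    simp [Finset.sum_range_succ]
  rw [this, sub_zero]
  exact (hs0 t).mul_left (t ^ 2)

lemma hs_sq (t : ℝ) : HasSum (fun n : ℕ => ((n : ℝ)) ^ 2 * (t ^ n / n.factorial))
    ((t ^ 2 + t) * Real.exp t) := by
  have h := (hs2 t).add (hs1 t)
  have : (fun n : ℕ => (n : ℝ) * ((n : ℝ) - 1) * (t ^ n / n.factorial)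
      + (n : ℝ) * (t ^ n / n.factorial)) = fun n : ℕ => ((n : ℝ)) ^ 2 * (t ^ n / n.factorial) := by
    ext n; ring
  rw [this] at h
  convert h using 1
  ring

lemma poisson_pmf_mul_hasSum (θ₀ : ℝ≥0) {f : ℕ → ℝ} {L : ℝ}
    (h : HasSum (fun n => f n * ((θ₀ : ℝ) ^ n / n.factorial)) L) :
    HasSum (fun n => poissonPMFReal θ₀ n * f n) (Real.exp (-(θ₀ : ℝ)) * L) := by
  have := h.mul_left (Real.exp (-(θ₀ : ℝ)))
  refine this.congr_fun fun n => ?_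
  simp only [poissonPMFReal]
  ring

lemma poisson_integrable (θ₀ : ℝ≥0) {f : ℕ → ℝ} (hf : ∀ n, 0 ≤ f n)
    (hsum : Summable (fun n => poissonPMFReal θ₀ n * f n)) :
    Integrable f (poissonMeasure θ₀) := by
  rw [integrable_poissonMeasure_iff]
  exact hsum.congr fun n => by rw [Real.norm_of_nonneg (hf n)]; rfl

lemma poisson_integral (θ₀ : ℝ≥0) {f : ℕ → ℝ} (hf : ∀ n, 0 ≤ f n) {L : ℝ}
    (h : HasSum (fun n => poissonPMFReal θ₀ n * f n) L) :
    ∫ n, f n ∂(poissonMeasure θ₀) = L := by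
  rw [integral_poissonMeasure' (poisson_integrable θ₀ hf h.summable)]
  exact h.tsum_eq

lemma poisson_moment_one (θ₀ : ℝ≥0) :
    Integrable (fun n : ℕ => (n : ℝ)) (poissonMeasure θ₀) ∧
    ∫ n : ℕ, (n : ℝ) ∂(poissonMeasure θ₀) = (θ₀ : ℝ) := by
  have h := poisson_pmf_mul_hasSum θ₀ (f := fun n : ℕ => (n : ℝ)) (hs1 (θ₀ : ℝ))
  rw [show Real.exp (-(θ₀:ℝ)) * ((θ₀:ℝ) * Real.exp (θ₀:ℝ)) = (θ₀:ℝ) by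
    rw [Real.exp_neg]; field_simp] at h
  exact ⟨poisson_integrable θ₀ (fun n => Nat.cast_nonneg n) h.summable,
    poisson_integral θ₀ (fun n => Nat.cast_nonneg n) h⟩

lemma poisson_moment_sq (θ₀ : ℝ≥0) :
    Integrable (fun n : ℕ => (n : ℝ) ^ 2) (poissonMeasure θ₀) ∧
    ∫ n : ℕ, (n : ℝ) ^ 2 ∂(poissonMeasure θ₀) = (θ₀ : ℝ) ^ 2 + (θ₀ : ℝ) := by
  have h := poisson_pmf_mul_hasSum θ₀ (f := fun n : ℕ => (n : ℝ) ^ 2) (hs_sq (θ₀ : ℝ))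
  rw [show Real.exp (-(θ₀:ℝ)) * (((θ₀:ℝ) ^ 2 + (θ₀:ℝ)) * Real.exp (θ₀:ℝ))
      = (θ₀:ℝ) ^ 2 + (θ₀:ℝ) by rw [Real.exp_neg]; field_simp] at h
  exact ⟨poisson_integrable θ₀ (fun n => by positivity) h.summable,
    poisson_integral θ₀ (fun n => by positivity) h⟩


section PiLemmas

variable {X : Type*} [MeasureSpace X] [IsProbabilityMeasure (volume : Measure X)]
  {f g : X → ℝ} {m : ℕ}

lemma prod_F_eq (f g : X → ℝ) (i j : Fin m) (y : Fin m → X) :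
    (∏ k, ((if k = i then f (y k) else 1) * (if k = j then g (y k) else 1)))
      = f (y i) * g (y j) := by
  rw [Finset.prod_mul_distrib, Finset.prod_ite_eq' Finset.univ i (fun k => f (y k)),
    Finset.prod_ite_eq' Finset.univ j (fun k => g (y k))]
  simp

lemma integrable_F (hf : Integrable f) (hg : Integrable g)
    (hfg : Integrable (fun x => f x * g x)) (i j k : Fin m) :
    Integrable (fun x : X => (if k = i then f x else 1) * (if k = j then g x else 1)) := by
  by_cases hi : k = i <;> by_cases hj : k = j
  · have : i = j := hi.symm.trans hj
    simp [hi, hj, this, hfg]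
  · have : ¬ i = j := fun h => hj (hi.trans h)
    simp [hi, hj, this, hf]
  · have : ¬ j = i := fun h => hi (hj.trans h)
    simp [hi, hj, this, hg]
  · simp [hi, hj, integrable_const]

lemma pi_integrable_mul (hf : Integrable f) (hg : Integrable g)
    (hfg : Integrable (fun x => f x * g x)) (i j : Fin m) :
    Integrable (fun y : Fin m → X => f (y i) * g (y j)) := by
  have := Integrable.fintype_prod (𝕜 := ℝ)
    (f := fun k x => (if k = i then f x else 1) * (if k = j then g x else 1))
    (fun k => integrable_F hf hg hfg i j k)
  refine this.congr (Eventually.of_forall fun y => ?_)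
  exact prod_F_eq f g i j y

lemma pi_integral_mul (hf : Integrable f) (hg : Integrable g)
    (hfg : Integrable (fun x => f x * g x)) (i j : Fin m) :
    ∫ y : Fin m → X, f (y i) * g (y j)
      = if i = j then ∫ x, f x * g x else (∫ x, f x) * ∫ x, g x := by
  have h1 : ∫ y : Fin m → X, f (y i) * g (y j)
      = ∫ y : Fin m → X, ∏ k, ((if k = i then f (y k) else 1) * (if k = j then g (y k) else 1)) :=
    integral_congr_ae (Eventually.of_forall fun y => (prod_F_eq f g i j y).symm)
  rw [h1, integral_fintype_prod_volume_eq_prod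
    (fun k x => (if k = i then f x else 1) * (if k = j then g x else 1))]
  have h2 : ∀ k : Fin m, (∫ x : X, (if k = i then f x else 1) * (if k = j then g x else 1))
      = (if k = i then (if k = j then ∫ x, f x * g x else ∫ x, f x)
          else (if k = j then ∫ x, g x else 1)) := by
    intro k
    by_cases hi : k = i <;> by_cases hj : k = j
    · have : i = j := hi.symm.trans hj
      simp [hi, hj, this]
    · have : ¬ i = j := fun h => hj (hi.trans h)
      simp [hi, hj, this]
    · have : ¬ j = i := fun h => hi (hj.trans h)
      simp [hi, hj, this]
    · simp [hi, hj]
  rw [Finset.prod_congr rfl (fun k _ => h2 k)]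
  by_cases hij : i = j
  · subst hij
    have : ∀ k : Fin m, (if k = i then (if k = i then ∫ x, f x * g x else ∫ x, f x)
        else (if k = i then ∫ x, g x else 1)) = if k = i then ∫ x, f x * g x else 1 := by
      intro k; by_cases hk : k = i <;> simp [hk]
    rw [Finset.prod_congr rfl (fun k _ => this k), Finset.prod_ite_eq' Finset.univ i]
    simp
  · have : ∀ k : Fin m, (if k = i then (if k = j then ∫ x, f x * g x else ∫ x, f x)
        else (if k = j then ∫ x, g x else 1))
        = (if k = i then ∫ x, f x else 1) * (if k = j then ∫ x, g x else 1) := by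
      intro k
      by_cases hi : k = i <;> by_cases hj : k = j <;> simp_all [hi, hj]
    rw [Finset.prod_congr rfl (fun k _ => this k), Finset.prod_mul_distrib,
      Finset.prod_ite_eq' Finset.univ i, Finset.prod_ite_eq' Finset.univ j]
    simp [hij]

lemma pi_integrable_single (hf : Integrable f) (i : Fin m) :
    Integrable (fun y : Fin m → X => f (y i)) := by
  have := pi_integrable_mul hf (integrable_const 1) (by simpa using hf) i i
  simpa using this

lemma pi_integral_single (hf : Integrable f) (i : Fin m) :
    ∫ y : Fin m → X, f (y i) = ∫ x, f x := by
  have := pi_integral_mul hf (integrable_const 1) (by simpa using hf) i i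
  simpa using this

end PiLemmas

lemma sq_sub_le' (x y : ℝ) : (x - y)^2 ≤ 2*x^2 + 2*y^2 := by nlinarith [sq_nonneg (x+y)]

lemma key_ineq {a b mR KR s : ℝ} (ha : 0 < a) (hb : 0 < b) (hm : 1 ≤ mR) (hK : 1 ≤ KR)
    (hs : 0 ≤ s) :
    KR * mR * ((KR*s+a)*((KR*s+a)+1)/(KR*mR+b)^2
        - 2*(s/mR)*((KR*s+a)/(KR*mR+b)) + (s/mR)^2)
      ≤ a/b + 2*a^2 + s/mR + 2*b^2*s^2/mR^3 := by
  have hm0 : (0:ℝ) < mR := by linarith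
  have hK0 : (0:ℝ) < KR := by linarith
  obtain ⟨α, hα_def⟩ : ∃ x : ℝ, x = KR*s + a := ⟨_, rfl⟩
  obtain ⟨r, hr_def⟩ : ∃ x : ℝ, x = KR*mR + b := ⟨_, rfl⟩
  have hα : 0 < α := by rw [hα_def]; positivity
  have hr : 0 < r := by rw [hr_def]; positivity
  have hKm : KR * mR ≤ r := by rw [hr_def]; linarith
  have hKm0 : 0 < KR * mR := by positivity
  have expand : α*(α+1)/r^2 - 2*(s/mR)*(α/r) + (s/mR)^2
      = α/r^2 + ((mR*a - b*s)/(mR*r))^2 := by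
    have h1 : α/r - s/mR = (mR*a - b*s)/(mR*r) := by
      rw [hα_def, hr_def]
      field_simp
      ring
    have h2 : α*(α+1)/r^2 - 2*(s/mR)*(α/r) + (s/mR)^2 = α/r^2 + (α/r - s/mR)^2 := by
      field_simp
      ring
    rw [h2, h1]
  rw [show KR * mR * ((KR*s+a)*((KR*s+a)+1)/(KR*mR+b)^2
        - 2*(s/mR)*((KR*s+a)/(KR*mR+b)) + (s/mR)^2)
      = KR * mR * (α*(α+1)/r^2 - 2*(s/mR)*(α/r) + (s/mR)^2) by rw [hα_def, hr_def],
    expand, mul_add]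
  have boundA : KR * mR * (α/r^2) ≤ s/mR + a/b := by
    have h1 : KR * mR * (α/r^2) = (KR*mR/r) * (α/r) := by field_simp
    have h2 : KR*mR/r ≤ 1 := (div_le_one hr).mpr hKm
    have h3 : 0 ≤ α/r := by positivity
    have h4 : (KR*mR/r) * (α/r) ≤ α/r := by
      nlinarith
    have h5 : α/r ≤ s/mR + a/b := by
      rw [hα_def, add_div]
      have hA : KR*s/r ≤ s/mR := by
        have h6 : KR*s/r ≤ KR*s/(KR*mR) := by
          gcongr
        have h7 : KR*s/(KR*mR) = s/mR := mul_div_mul_left s mR hK0.ne'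
        linarith [h7 ▸ h6]
      have hB : a/r ≤ a/b := by
        gcongr
        rw [hr_def]; nlinarith
      exact add_le_add hA hB
    linarith [h1 ▸ h4]
  have boundB : KR * mR * (((mR*a - b*s)/(mR*r))^2) ≤ 2*a^2 + 2*b^2*s^2/mR^3 := by
    obtain ⟨q, hq_def⟩ : ∃ q : ℝ, q = mR*a - b*s := ⟨_, rfl⟩
    rw [← hq_def]
    have e1 : KR * mR * (((q)/(mR*r))^2) = KR * mR * q^2 / (mR*r)^2 := by
      field_simp
    have h1 : (mR*(KR*mR))^2 ≤ (mR*r)^2 := by gcongr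
    have h2 : KR * mR * q^2 / (mR*r)^2 ≤ KR * mR * q^2 / (mR*(KR*mR))^2 := by
      gcongr
    have e2 : KR * mR * q^2 / (mR*(KR*mR))^2 = q^2/(KR*mR^3) := by
      field_simp
    have h3 : q^2/(KR*mR^3) ≤ q^2/mR^3 := by
      gcongr
      nlinarith [pow_pos hm0 3]
    have h4 : q^2 ≤ 2*mR^2*a^2 + 2*b^2*s^2 := by
      rw [hq_def]
      have h := sq_sub_le' (mR*a) (b*s)
      have he : 2*(mR*a)^2 + 2*(b*s)^2 = 2*mR^2*a^2 + 2*b^2*s^2 := by ring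
      linarith
    have h5 : q^2/mR^3 ≤ (2*mR^2*a^2 + 2*b^2*s^2)/mR^3 := by gcongr
    have e3 : (2*mR^2*a^2 + 2*b^2*s^2)/mR^3 = 2*a^2/mR + 2*b^2*s^2/mR^3 := by
      field_simp
    have h6 : 2*a^2/mR ≤ 2*a^2 := by
      rw [div_le_iff₀ hm0]
      have hx : 0 ≤ 2*a^2*(mR - 1) := mul_nonneg (by positivity) (by linarith)
      linarith
    calc KR * mR * (((q)/(mR*r))^2) = KR * mR * q^2 / (mR*r)^2 := e1
      _ ≤ KR * mR * q^2 / (mR*(KR*mR))^2 := h2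
      _ = q^2/(KR*mR^3) := e2
      _ ≤ q^2/mR^3 := h3
      _ ≤ (2*mR^2*a^2 + 2*b^2*s^2)/mR^3 := h5
      _ = 2*a^2/mR + 2*b^2*s^2/mR^3 := e3
      _ ≤ 2*a^2 + 2*b^2*s^2/mR^3 := by linarith
  linarith

/-- Proposition 2(i). For i.i.d. Poisson(θ₀) data, the expectations
`E ∫ K m (θ − θ̂)² dGamma(K·S + a, K·m + b)(θ)` are bounded uniformly over all subset
sizes `m ≥ 1` and numbers of subsets `K ≥ 1`, where `S = ∑ yᵢ` and `θ̂ = S/m`. -/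
theorem poisson_subset_posterior_uniform_second_moment
    (θ₀ : ℝ≥0) (hθ₀ : 0 < θ₀) (a b : ℝ) (ha : 0 < a) (hb : 0 < b) :
    ∃ C : ℝ, ∀ (m K : ℕ), 1 ≤ m → 1 ≤ K →
      (∫ y : Fin m → ℕ,
          (∫ θ : ℝ, (K : ℝ) * m * (θ - (∑ i, (y i : ℝ)) / m) ^ 2
            ∂(gammaMeasure ((K : ℝ) * ∑ i, (y i : ℝ) + a) ((K : ℝ) * m + b)))
        ∂(Measure.pi fun _ : Fin m => poissonMeasure θ₀)) ≤ C := by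
  classical
  set B : ℝ := ((θ₀ : ℝ) ^ 2 + (θ₀ : ℝ)) + (θ₀ : ℝ) ^ 2 with hB_def
  have hB : 0 ≤ B := by positivity
  refine ⟨a / b + 2 * a ^ 2 + (θ₀ : ℝ) + 2 * b ^ 2 * B, ?_⟩
  intro m K hm hK
  letI : MeasureSpace ℕ := { volume := poissonMeasure θ₀ }
  haveI : IsProbabilityMeasure (volume : Measure ℕ) := inferInstanceAs (IsProbabilityMeasure (poissonMeasure θ₀))
  have hm' : (1 : ℝ) ≤ (m : ℝ) := by exact_mod_cast hm
  have hK' : (1 : ℝ) ≤ (K : ℝ) := by exact_mod_cast hK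
  have hm0 : (0 : ℝ) < (m : ℝ) := by linarith
  have hpi : (Measure.pi fun _ : Fin m => poissonMeasure θ₀)
      = (volume : Measure (Fin m → ℕ)) := rfl
  rw [hpi]
  obtain ⟨int1, val1⟩ := poisson_moment_one θ₀
  obtain ⟨int2, val2⟩ := poisson_moment_sq θ₀
  have val1' : (∫ n : ℕ, (n : ℝ)) = (θ₀ : ℝ) := val1
  have val2' : (∫ n : ℕ, (n : ℝ) ^ 2) = (θ₀ : ℝ) ^ 2 + (θ₀ : ℝ) := val2
  have intmul : Integrable (fun x : ℕ => (x : ℝ) * (x : ℝ)) (volume : Measure ℕ) := by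
    have : (fun x : ℕ => (x : ℝ) * (x : ℝ)) = fun x : ℕ => (x : ℝ) ^ 2 := by
      ext x; ring
    rw [this]; exact int2
  -- first moment of S
  have hSint : Integrable (fun y : Fin m → ℕ => ∑ i, (y i : ℝ)) := by
    apply integrable_finset_sum
    intro i _
    exact pi_integrable_single (f := fun n : ℕ => (n : ℝ)) int1 i
  have hSval : (∫ y : Fin m → ℕ, ∑ i, (y i : ℝ)) = (m : ℝ) * (θ₀ : ℝ) := by
    rw [integral_finset_sum _ (fun i _ =>
      pi_integrable_single (f := fun n : ℕ => (n : ℝ)) int1 i)]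
    rw [Finset.sum_congr rfl (fun i _ =>
      pi_integral_single (f := fun n : ℕ => (n : ℝ)) int1 i)]
    rw [val1', Finset.sum_const, Finset.card_univ, Fintype.card_fin, nsmul_eq_mul]
  -- second moment of S
  have hsq_eq : (fun y : Fin m → ℕ => (∑ i, (y i : ℝ)) ^ 2)
      = fun y : Fin m → ℕ => ∑ i, ∑ j, (y i : ℝ) * (y j : ℝ) := by
    ext y
    rw [sq, Finset.sum_mul_sum]
  have hS2int : Integrable (fun y : Fin m → ℕ => (∑ i, (y i : ℝ)) ^ 2) := by
    rw [hsq_eq]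
    apply integrable_finset_sum
    intro i _
    apply integrable_finset_sum
    intro j _
    exact pi_integrable_mul (f := fun n : ℕ => (n : ℝ)) (g := fun n : ℕ => (n : ℝ))
      int1 int1 intmul i j
  have hS2val : (∫ y : Fin m → ℕ, (∑ i, (y i : ℝ)) ^ 2) ≤ (m : ℝ) ^ 2 * B := by
    rw [hsq_eq]
    rw [integral_finset_sum _ (fun i _ => integrable_finset_sum _ (fun j _ =>
      pi_integrable_mul (f := fun n : ℕ => (n : ℝ)) (g := fun n : ℕ => (n : ℝ))
        int1 int1 intmul i j))]
    have step : ∀ i : Fin m, (∫ y : Fin m → ℕ, ∑ j, (y i : ℝ) * (y j : ℝ))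
        ≤ ∑ j : Fin m, B := by
      intro i
      rw [integral_finset_sum _ (fun j _ =>
        pi_integrable_mul (f := fun n : ℕ => (n : ℝ)) (g := fun n : ℕ => (n : ℝ))
          int1 int1 intmul i j)]
      apply Finset.sum_le_sum
      intro j _
      rw [pi_integral_mul (f := fun n : ℕ => (n : ℝ)) (g := fun n : ℕ => (n : ℝ))
        int1 int1 intmul i j]
      by_cases hij : i = j
      · rw [if_pos hij]
        have h2 : (∫ x : ℕ, (x : ℝ) * (x : ℝ)) = (θ₀ : ℝ) ^ 2 + (θ₀ : ℝ) := by
          have : (fun x : ℕ => (x : ℝ) * (x : ℝ)) = fun x : ℕ => (x : ℝ) ^ 2 := by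
            ext x; ring
          rw [this, val2']
        rw [h2, hB_def]
        nlinarith [sq_nonneg ((θ₀ : ℝ))]
      · rw [if_neg hij, val1', hB_def]
        nlinarith [sq_nonneg ((θ₀ : ℝ)), (θ₀ : ℝ≥0).coe_nonneg]
    calc (∑ i : Fin m, ∫ y : Fin m → ℕ, ∑ j, (y i : ℝ) * (y j : ℝ))
        ≤ ∑ i : Fin m, ∑ j : Fin m, B := Finset.sum_le_sum (fun i _ => step i)
      _ = (m : ℝ) ^ 2 * B := by
          rw [Finset.sum_const, Finset.sum_const, Finset.card_univ, Fintype.card_fin,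
            nsmul_eq_mul, nsmul_eq_mul]
          ring
  -- pointwise bound on the inner integral
  have hinner_le : ∀ y : Fin m → ℕ,
      (∫ θ : ℝ, (K : ℝ) * m * (θ - (∑ i, (y i : ℝ)) / m) ^ 2
        ∂(gammaMeasure ((K : ℝ) * ∑ i, (y i : ℝ) + a) ((K : ℝ) * m + b)))
      ≤ a / b + 2 * a ^ 2 + (∑ i, (y i : ℝ)) / m
          + 2 * b ^ 2 * (∑ i, (y i : ℝ)) ^ 2 / (m : ℝ) ^ 3 := by
    intro y
    have hs : 0 ≤ ∑ i, (y i : ℝ) := Finset.sum_nonneg fun i _ => Nat.cast_nonneg _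
    have hα : 0 < (K : ℝ) * ∑ i, (y i : ℝ) + a := by positivity
    have hr : 0 < (K : ℝ) * (m : ℝ) + b := by positivity
    rw [gamma_inner ((K : ℝ) * (m : ℝ)) hα hr ((∑ i, (y i : ℝ)) / (m : ℝ))]
    exact key_ineq ha hb hm' hK' hs
  have hnonneg : ∀ y : Fin m → ℕ,
      0 ≤ (∫ θ : ℝ, (K : ℝ) * m * (θ - (∑ i, (y i : ℝ)) / m) ^ 2
        ∂(gammaMeasure ((K : ℝ) * ∑ i, (y i : ℝ) + a) ((K : ℝ) * m + b))) := by
    intro y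
    apply integral_nonneg
    intro θ
    positivity
  have hgint : Integrable (fun y : Fin m → ℕ => a / b + 2 * a ^ 2 + (∑ i, (y i : ℝ)) / m
      + 2 * b ^ 2 * (∑ i, (y i : ℝ)) ^ 2 / (m : ℝ) ^ 3) := by
    apply Integrable.add
    · apply Integrable.add
      · exact integrable_const _
      · exact hSint.div_const _
    · exact (hS2int.const_mul (2 * b ^ 2)).div_const _
  calc (∫ y : Fin m → ℕ,
      (∫ θ : ℝ, (K : ℝ) * m * (θ - (∑ i, (y i : ℝ)) / m) ^ 2
        ∂(gammaMeasure ((K : ℝ) * ∑ i, (y i : ℝ) + a) ((K : ℝ) * m + b))))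
      ≤ ∫ y : Fin m → ℕ, (a / b + 2 * a ^ 2 + (∑ i, (y i : ℝ)) / m
          + 2 * b ^ 2 * (∑ i, (y i : ℝ)) ^ 2 / (m : ℝ) ^ 3) :=
        integral_mono_of_nonneg (Filter.Eventually.of_forall hnonneg) hgint
          (Filter.Eventually.of_forall hinner_le)
    _ ≤ a / b + 2 * a ^ 2 + (θ₀ : ℝ) + 2 * b ^ 2 * B := by
        have hc1 : Integrable (fun y : Fin m → ℕ => a / b + 2 * a ^ 2 + (∑ i, (y i : ℝ)) / m) :=
          (integrable_const _).add (hSint.div_const _)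
        rw [integral_add hc1 ((hS2int.const_mul (2 * b ^ 2)).div_const _),
          integral_add (integrable_const _) (hSint.div_const _),
          integral_const, integral_div, integral_div, MeasureTheory.integral_const_mul,
          hSval]
        simp only [measure_univ, probReal_univ, ENNReal.toReal_one, smul_eq_mul, one_mul]
        have e1 : (m : ℝ) * (θ₀ : ℝ) / (m : ℝ) = (θ₀ : ℝ) := by
          field_simp
        rw [e1]
        have h2 : 2 * b ^ 2 * (∫ y : Fin m → ℕ, (∑ i, (y i : ℝ)) ^ 2) / (m : ℝ) ^ 3
            ≤ 2 * b ^ 2 * ((m : ℝ) ^ 2 * B) / (m : ℝ) ^ 3 := by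
          gcongr
        have e2 : 2 * b ^ 2 * ((m : ℝ) ^ 2 * B) / (m : ℝ) ^ 3 = 2 * b ^ 2 * B / (m : ℝ) := by
          field_simp
        have h3 : 2 * b ^ 2 * B / (m : ℝ) ≤ 2 * b ^ 2 * B :=
          div_le_self (by positivity) hm'
        linarith
end

section
/- Fix θ₀ ∈ (0,1) and a, b > 0. For each integer m ≥ 1 let y₁, …, y_m be independent and identically distributed Bernoulli(θ₀) random variables taking values in {0,1}, and set S = ∑_{i=1}^m y_i and θ̂ = S/m. Then sup over all integers m ≥ 1 and K ≥ 1 of E[ ∫₀¹ K m (θ − θ̂)² dBeta(K·S + a, K·(m − S) + b)(θ) ] is finite, where the outer expectation is over the Bernoulli data. -/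
open MeasureTheory ProbabilityTheory Set
open scoped ENNReal

/-- The Beta(α, β) distribution on `ℝ`, supported on `(0,1)`, with density
`x^(α−1) (1−x)^(β−1) / B(α, β)` where `B(α, β) = Γ(α)Γ(β)/Γ(α+β)`. -/
noncomputable def betaMeasure (α β : ℝ) : Measure ℝ :=
  volume.withDensity fun x => ENNReal.ofReal
    (if x ∈ Ioo (0:ℝ) 1 then
      x ^ (α - 1) * (1 - x) ^ (β - 1) * Real.Gamma (α + β) / (Real.Gamma α * Real.Gamma β)
    else 0)

section aux

lemma cbeta_int (p q : ℝ) (hp : 0 < p) (hq : 0 < q) :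
    IntegrableOn (fun x : ℝ => (x:ℂ) ^ ((p:ℂ) - 1) * (1 - (x:ℂ)) ^ ((q:ℂ) - 1)) (Ioc 0 1) volume := by
  have := Complex.betaIntegral_convergent (u := (p:ℂ)) (v := (q:ℂ)) (by simpa) (by simpa)
  simpa [intervalIntegrable_iff, uIoc_of_le (zero_le_one)] using this

lemma ae_eq_beta (p q : ℝ) :
    ∀ x ∈ Ioo (0:ℝ) 1, ((x ^ (p-1) * (1-x) ^ (q-1) : ℝ) : ℂ)
      = (x:ℂ) ^ ((p:ℂ) - 1) * (1 - (x:ℂ)) ^ ((q:ℂ) - 1) := by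
  intro x hx
  rw [Complex.ofReal_mul, Complex.ofReal_cpow hx.1.le, Complex.ofReal_cpow (by linarith [hx.2] : (0:ℝ) ≤ 1 - x)]
  push_cast
  ring_nf

lemma rbeta_integrable (p q : ℝ) (hp : 0 < p) (hq : 0 < q) :
    IntegrableOn (fun x : ℝ => x ^ (p-1) * (1-x) ^ (q-1)) (Ioo 0 1) volume := by
  have h := ((cbeta_int p q hp hq).mono_set Ioo_subset_Ioc_self).re
  refine h.congr (Filter.EventuallyEq.symm ?_)
  refine (ae_restrict_iff' measurableSet_Ioo).2 (Filter.Eventually.of_forall ?_)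
  intro x hx
  dsimp only
  rw [← ae_eq_beta p q x hx]
  simp

lemma rbeta_eval (p q : ℝ) (hp : 0 < p) (hq : 0 < q) :
    ∫ x in Ioo (0:ℝ) 1, x ^ (p-1) * (1-x) ^ (q-1)
      = Real.Gamma p * Real.Gamma q / Real.Gamma (p+q) := by
  have h := Complex.Gamma_mul_Gamma_eq_betaIntegral (s := (p:ℂ)) (t := (q:ℂ)) (by simpa) (by simpa)
  rw [Complex.betaIntegral] at h
  have h2 : (∫ (x : ℝ) in (0:ℝ)..1, (x:ℂ) ^ ((p:ℂ) - 1) * (1 - (x:ℂ)) ^ ((q:ℂ) - 1))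
      = ∫ x in Ioo (0:ℝ) 1, ((x ^ (p-1) * (1-x) ^ (q-1) : ℝ) : ℂ) := by
    rw [intervalIntegral.integral_of_le zero_le_one, MeasureTheory.integral_Ioc_eq_integral_Ioo]
    exact setIntegral_congr_fun measurableSet_Ioo (fun x hx => (ae_eq_beta p q x hx).symm)
  rw [h2] at h
  rw [show (∫ x in Ioo (0:ℝ) 1, ((x ^ (p-1) * (1-x) ^ (q-1) : ℝ) : ℂ))
      = ((∫ x in Ioo (0:ℝ) 1, x ^ (p-1) * (1-x) ^ (q-1) : ℝ) : ℂ) from integral_ofReal] at h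
  have hgam : Real.Gamma (p+q) ≠ 0 := (Real.Gamma_pos_of_pos (by linarith)).ne'
  rw [show ((p:ℂ)) = ((p:ℝ):ℂ) from rfl, show ((q:ℂ)) = ((q:ℝ):ℂ) from rfl] at h
  rw [Complex.Gamma_ofReal, Complex.Gamma_ofReal,
    show (((p:ℝ):ℂ) + ((q:ℝ):ℂ)) = (((p+q:ℝ)):ℂ) by push_cast; ring, Complex.Gamma_ofReal] at h
  have h4 : Real.Gamma p * Real.Gamma q
      = Real.Gamma (p+q) * ∫ x in Ioo (0:ℝ) 1, x ^ (p-1) * (1-x) ^ (q-1) := by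
    exact_mod_cast h
  field_simp
  linarith [h4]

lemma beta_integral_eq (α β : ℝ) (hα : 0 < α) (hβ : 0 < β) (g : ℝ → ℝ) :
    ∫ θ, g θ ∂(_root_.betaMeasure α β)
      = ∫ x in Ioo (0:ℝ) 1,
          (x ^ (α - 1) * (1 - x) ^ (β - 1) * Real.Gamma (α + β) / (Real.Gamma α * Real.Gamma β)) * g x := by
  set d : ℝ → ℝ := fun x => if x ∈ Ioo (0:ℝ) 1 then
      x ^ (α - 1) * (1 - x) ^ (β - 1) * Real.Gamma (α + β) / (Real.Gamma α * Real.Gamma β)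
    else 0 with hd
  have hdm : Measurable d := by
    apply Measurable.ite measurableSet_Ioo ?_ measurable_const
    fun_prop
  have hga := Real.Gamma_pos_of_pos hα
  have hgb := Real.Gamma_pos_of_pos hβ
  have hgab := Real.Gamma_pos_of_pos (by linarith : (0:ℝ) < α + β)
  have hnn : ∀ x, 0 ≤ d x := by
    intro x
    rw [hd]
    dsimp only
    split
    · rename_i hx
      have h1 : (0:ℝ) < x := hx.1
      have h2 : (0:ℝ) < 1 - x := by linarith [hx.2]
      positivity
    · exact le_refl 0
  have key : _root_.betaMeasure α β = volume.withDensity fun x => ((d x).toNNReal : ℝ≥0∞) := by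
    rw [_root_.betaMeasure]
    congr 1
  rw [key, integral_withDensity_eq_integral_smul (by fun_prop : Measurable fun x => (d x).toNNReal)]
  rw [← setIntegral_eq_integral_of_forall_compl_eq_zero
    (s := Ioo (0:ℝ) 1) (fun x hx => by
      have : d x = 0 := by rw [hd]; exact if_neg hx
      simp only [NNReal.smul_def, this, Real.toNNReal_zero, NNReal.coe_zero, zero_smul])]
  refine setIntegral_congr_fun measurableSet_Ioo (fun x hx => ?_)
  have hdx : d x = x ^ (α - 1) * (1 - x) ^ (β - 1) * Real.Gamma (α + β) / (Real.Gamma α * Real.Gamma β) := by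
    rw [hd]; exact if_pos hx
  rw [NNReal.smul_def, smul_eq_mul, show (x ^ (α - 1) * (1 - x) ^ (β - 1) * Real.Gamma (α + β) / (Real.Gamma α * Real.Gamma β)) = d x from hdx.symm, Real.coe_toNNReal _ (hnn x), hdx]

lemma beta_moment (α β c : ℝ) (hα : 0 < α) (hβ : 0 < β) :
    ∫ θ, (θ - c)^2 ∂(_root_.betaMeasure α β)
      = α*β/((α+β)^2*(α+β+1)) + (α/(α+β) - c)^2 := by
  set G : ℝ := Real.Gamma (α + β) / (Real.Gamma α * Real.Gamma β) with hG
  have hn : (0:ℝ) < α + β := by linarith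
  have hga := Real.Gamma_pos_of_pos hα
  have hgb := Real.Gamma_pos_of_pos hβ
  have hgn := Real.Gamma_pos_of_pos hn
  rw [beta_integral_eq α β hα hβ _]
  have key : ∀ x ∈ Ioo (0:ℝ) 1,
      (x ^ (α - 1) * (1 - x) ^ (β - 1) * Real.Gamma (α + β) / (Real.Gamma α * Real.Gamma β)) * (x - c)^2
      = G * (x ^ (α + 2 - 1) * (1-x) ^ (β - 1))
        - (2*c*G) * (x ^ (α + 1 - 1) * (1-x) ^ (β - 1))
        + (c^2*G) * (x ^ (α - 1) * (1-x) ^ (β - 1)) := by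
    intro x hx
    have h1 : x ^ (α + 1 - 1) = x ^ (α - 1) * x := by
      rw [show α + 1 - 1 = (α - 1) + 1 by ring, Real.rpow_add hx.1, Real.rpow_one]
    have h2 : x ^ (α + 2 - 1) = x ^ (α - 1) * x ^ (2:ℕ) := by
      rw [show α + 2 - 1 = (α - 1) + 2 by ring, Real.rpow_add hx.1, ← Real.rpow_natCast x 2]
      norm_num
    rw [h1, h2, hG]
    ring
  rw [setIntegral_congr_fun measurableSet_Ioo key]
  have i0 := rbeta_integrable α β hα hβ
  have i1 := rbeta_integrable (α+1) β (by linarith) hβ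
  have i2 := rbeta_integrable (α+2) β (by linarith) hβ
  have I2 : Integrable (fun x : ℝ => G * (x ^ (α + 2 - 1) * (1-x) ^ (β - 1))) (volume.restrict (Ioo 0 1)) := i2.const_mul G
  have I1 : Integrable (fun x : ℝ => 2*c*G * (x ^ (α + 1 - 1) * (1-x) ^ (β - 1))) (volume.restrict (Ioo 0 1)) := i1.const_mul _
  have I0 : Integrable (fun x : ℝ => c^2*G * (x ^ (α - 1) * (1-x) ^ (β - 1))) (volume.restrict (Ioo 0 1)) := i0.const_mul _
  have Isub : Integrable (fun x : ℝ => G * (x ^ (α + 2 - 1) * (1-x) ^ (β - 1)) - 2*c*G * (x ^ (α + 1 - 1) * (1-x) ^ (β - 1))) (volume.restrict (Ioo 0 1)) := I2.sub I1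
  rw [show (∫ x in Ioo (0:ℝ) 1,
      (G * (x ^ (α + 2 - 1) * (1-x) ^ (β - 1))
        - (2*c*G) * (x ^ (α + 1 - 1) * (1-x) ^ (β - 1))
        + (c^2*G) * (x ^ (α - 1) * (1-x) ^ (β - 1))))
      = (∫ x in Ioo (0:ℝ) 1, (G * (x ^ (α + 2 - 1) * (1-x) ^ (β - 1))
        - (2*c*G) * (x ^ (α + 1 - 1) * (1-x) ^ (β - 1))))
        + ∫ x in Ioo (0:ℝ) 1, (c^2*G) * (x ^ (α - 1) * (1-x) ^ (β - 1)) from integral_add Isub I0,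
     integral_sub I2 I1,
      integral_const_mul, integral_const_mul, integral_const_mul,
      rbeta_eval α β hα hβ, rbeta_eval (α+1) β (by linarith) hβ, rbeta_eval (α+2) β (by linarith) hβ]
  have g1 : Real.Gamma (α+1) = α * Real.Gamma α := Real.Gamma_add_one hα.ne'
  have g2 : Real.Gamma (α+2) = (α+1) * (α * Real.Gamma α) := by
    rw [show α+2 = (α+1)+1 by ring, Real.Gamma_add_one (by linarith), g1]
  have gn1 : Real.Gamma (α+1+β) = (α+β) * Real.Gamma (α+β) := by
    rw [show α+1+β = (α+β)+1 by ring, Real.Gamma_add_one hn.ne']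
  have gn2 : Real.Gamma (α+2+β) = (α+β+1) * ((α+β) * Real.Gamma (α+β)) := by
    rw [show α+2+β = ((α+β)+1)+1 by ring, Real.Gamma_add_one (by linarith),
        Real.Gamma_add_one hn.ne']
  rw [g1, g2, gn1, gn2, hG]
  field_simp
  ring

lemma key_bound (a b K m s : ℝ) (ha : 0 < a) (hb : 0 < b) (hK : 1 ≤ K) (hm : 1 ≤ m)
    (hs0 : 0 ≤ s) (hsm : s ≤ m) :
    K*m * ((K*s+a)*(K*(m-s)+b)/(((K*s+a)+(K*(m-s)+b))^2*(((K*s+a)+(K*(m-s)+b))+1))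
      + ((K*s+a)/((K*s+a)+(K*(m-s)+b)) - s/m)^2) ≤ 1/4 + (a+b)^2 := by
  have hm0 : (0:ℝ) < m := by linarith
  have hK0 : (0:ℝ) < K := by linarith
  set α := K*s+a with hα
  set β := K*(m-s)+b with hβ
  have hα0 : 0 < α := by nlinarith
  have hβ0 : 0 < β := by nlinarith
  have hn0 : 0 < α + β := by linarith
  have hnkm : α + β = K*m + a + b := by rw [hα, hβ]; ring
  have hkm1 : 1 ≤ K*m := by nlinarith
  have hmkn : K*m ≤ α + β := by rw [hnkm]; linarith
  rw [mul_add]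
  have T1 : K*m * (α*β/((α+β)^2*((α+β)+1))) ≤ 1/4 := by
    rw [mul_div_assoc']
    rw [div_le_iff₀ (by positivity)]
    have h4 : α*β ≤ (α+β)^2/4 := by nlinarith [sq_nonneg (α-β)]
    have h5 : K*m ≤ (α+β)+1 := by linarith
    nlinarith [mul_le_mul_of_nonneg_left h4 (le_of_lt (by positivity : (0:ℝ) < K*m)),
      mul_le_mul_of_nonneg_right h5 (by positivity : (0:ℝ) ≤ (α+β)^2/4)]
  have T2 : K*m * ((α/(α+β) - s/m)^2) ≤ (a+b)^2 := by
    have hdiff : α/(α+β) - s/m = (m*a - s*(a+b))/(m*(α+β)) := by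
      rw [hnkm, hα]
      field_simp
      ring
    rw [hdiff, div_pow, mul_div_assoc']
    rw [div_le_iff₀ (by positivity)]
    have h1 : (m*a - s*(a+b))^2 ≤ (m*(a+b))^2 := by
      apply sq_le_sq'
      · nlinarith
      · nlinarith
    have h2 : K*m ≤ (α+β)^2 := by nlinarith
    have c1 : K*m*(m*a - s*(a+b))^2 ≤ K*m*(m*(a+b))^2 :=
      mul_le_mul_of_nonneg_left h1 (by positivity)
    have c2 : K*m*(m*(a+b))^2 ≤ (α+β)^2*(m*(a+b))^2 :=
      mul_le_mul_of_nonneg_right h2 (sq_nonneg _)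
    have c3 : (α+β)^2*(m*(a+b))^2 = (a+b)^2*(m*(α+β))^2 := by ring
    linarith
  linarith

end aux

/-- Proposition 2(iii). For i.i.d. Bernoulli(θ₀) data, the expectations
`E ∫ K m (θ − θ̂)² dBeta(K·S + a, K·(m−S) + b)(θ)` are bounded uniformly over all subset
sizes `m ≥ 1` and numbers of subsets `K ≥ 1`, where `S = ∑ yᵢ` and `θ̂ = S/m`. -/
theorem bernoulli_subset_posterior_uniform_second_moment
    (θ₀ : ℝ≥0∞) (hθ₀ : 0 < θ₀) (hθ₀1 : θ₀ < 1) (a b : ℝ) (ha : 0 < a) (hb : 0 < b) :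
    ∃ C : ℝ, ∀ (m K : ℕ), 1 ≤ m → 1 ≤ K →
      (∫ y : Fin m → Bool,
          (∫ θ : ℝ, (K : ℝ) * m *
              (θ - (∑ i, if y i then (1:ℝ) else 0) / m) ^ 2
            ∂(_root_.betaMeasure ((K : ℝ) * (∑ i, if y i then (1:ℝ) else 0) + a)
                ((K : ℝ) * ((m : ℝ) - ∑ i, if y i then (1:ℝ) else 0) + b)))
        ∂(Measure.pi fun _ : Fin m => (PMF.bernoulli θ₀.toNNReal
          (by simpa using ENNReal.toNNReal_mono ENNReal.one_ne_top hθ₀1.le)).toMeasure)) ≤ C := by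
  refine ⟨1/4 + (a+b)^2, fun m K hm hK => ?_⟩
  have hptwise : ∀ y : Fin m → Bool,
      (∫ θ : ℝ, (K : ℝ) * m *
          (θ - (∑ i, if y i then (1:ℝ) else 0) / m) ^ 2
        ∂(_root_.betaMeasure ((K : ℝ) * (∑ i, if y i then (1:ℝ) else 0) + a)
            ((K : ℝ) * ((m : ℝ) - ∑ i, if y i then (1:ℝ) else 0) + b)))
      ≤ 1/4 + (a+b)^2 := by
    intro y
    set s : ℝ := ∑ i, if y i then (1:ℝ) else 0 with hs
    have hs0 : 0 ≤ s := Finset.sum_nonneg (fun i _ => by split <;> norm_num)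
    have hsm : s ≤ m := by
      calc s ≤ ∑ _i : Fin m, (1:ℝ) := Finset.sum_le_sum (fun i _ => by split <;> norm_num)
      _ = m := by simp
    have hK1 : (1:ℝ) ≤ K := by exact_mod_cast hK
    have hm1 : (1:ℝ) ≤ m := by exact_mod_cast hm
    have hα0 : 0 < (K:ℝ) * s + a := by nlinarith
    have hβ0 : 0 < (K:ℝ) * ((m:ℝ) - s) + b := by nlinarith
    rw [integral_const_mul, beta_moment _ _ _ hα0 hβ0]
    exact key_bound a b K m s ha hb hK1 hm1 hs0 hsm
  calc _ ≤ ∫ _y : Fin m → Bool, (1/4 + (a+b)^2)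
        ∂(Measure.pi fun _ : Fin m => (PMF.bernoulli θ₀.toNNReal
          (by simpa using ENNReal.toNNReal_mono ENNReal.one_ne_top hθ₀1.le)).toMeasure) := by
        exact integral_mono Integrable.of_finite (integrable_const _) hptwise
    _ = 1/4 + (a+b)^2 := by simp
end

section
/- For every real s ≥ 1, the upper incomplete gamma function satisfies ∫₁^∞ u^{s−1} e^{−u} du ≥ e^{−1} Γ(s) (1 + 1/s)^{s−1}. -/
open MeasureTheory Set

lemma key_pointwise (s : ℝ) (hs : 1 ≤ s) (t : ℝ) (ht : 0 < t) :
    (1 + 1/s) ^ (s-1) * t ^ (s-1)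
      - (s-1) * (1 + 1/s) ^ (s-2) / s^2 * (t ^ s - s * t ^ (s-1))
      ≤ (t+1) ^ (s-1) := by
  have hs0 : (0:ℝ) < s := by linarith
  rcases eq_or_lt_of_le hs with h1 | h1
  · simp [← h1]
  have ha : 0 < s - 1 := by linarith
  set c := 1 + 1/s with hc_def
  have hc0 : 0 < c := by positivity
  have h1t : 0 < 1 + 1/t := by positivity
  have hsplit : (t+1) ^ (s-1) = t ^ (s-1) * (1 + 1/t) ^ (s-1) := by
    rw [← Real.mul_rpow ht.le h1t.le]
    congr 1
    field_simp
  set L := Real.log (1 + 1/t) - Real.log c with hL_def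
  have htangent : c ^ (s-1) * (1 + (s-1) * L) ≤ (1 + 1/t) ^ (s-1) := by
    rw [Real.rpow_def_of_pos h1t, Real.rpow_def_of_pos hc0]
    have heq : Real.log (1 + 1/t) * (s-1) = Real.log c * (s-1) + ((s-1) * L) := by
      simp only [hL_def]; ring
    rw [heq, Real.exp_add]
    nlinarith [Real.add_one_le_exp ((s-1) * L), Real.exp_pos (Real.log c * (s-1))]
  have hLlb : (s - t) / (s * (t+1)) ≤ L := by
    have hq : 0 < (1 + 1/t) / c := by positivity
    have hlog := Real.one_sub_inv_le_log_of_pos hq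
    rw [Real.log_div (by positivity) (by positivity)] at hlog
    have heq : 1 - ((1 + 1/t) / c)⁻¹ = (s - t) / (s * (t+1)) := by
      rw [hc_def]; field_simp; ring
    rw [heq] at hlog
    exact hlog
  have hM : (s - t) / s^2 ≤ c * L := by
    have h1 : c * ((s - t) / (s * (t+1))) ≤ c * L :=
      mul_le_mul_of_nonneg_left hLlb hc0.le
    have h2 : c * ((s - t) / (s * (t+1))) - (s - t)/s^2 = (s-t)^2 / (s^2 * (t+1)) := by
      rw [hc_def]; field_simp; ring
    nlinarith [sq_nonneg (s - t), mul_pos (mul_pos hs0 hs0) (by linarith : (0:ℝ) < t + 1),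
      div_nonneg (sq_nonneg (s-t)) (by positivity : (0:ℝ) ≤ s^2 * (t+1))]
  have hcc : c ^ (s-1) = c ^ (s-2) * c := by
    rw [show s - 1 = (s-2) + 1 by ring, Real.rpow_add_one hc0.ne' _]
  have hK : c ^ (s-2) * ((s - t) / s^2) ≤ c ^ (s-1) * L := by
    rw [hcc, mul_assoc]
    exact mul_le_mul_of_nonneg_left hM (Real.rpow_pos_of_pos hc0 _).le
  have hts : t ^ s = t ^ (s-1) * t := by
    nth_rewrite 1 [show s = (s-1)+1 by ring]
    exact Real.rpow_add_one ht.ne' _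
  have hX : 0 < t ^ (s-1) := Real.rpow_pos_of_pos ht _
  rw [hsplit, hts]
  have htang2 : t ^ (s-1) * (c ^ (s-1) * (1 + (s-1) * L)) ≤ t ^ (s-1) * (1 + 1/t) ^ (s-1) :=
    mul_le_mul_of_nonneg_left htangent hX.le
  have hK2 : ((s-1) * t ^ (s-1)) * (c ^ (s-2) * ((s - t) / s^2))
      ≤ ((s-1) * t ^ (s-1)) * (c ^ (s-1) * L) :=
    mul_le_mul_of_nonneg_left hK (by positivity)
  have hs2 : (0:ℝ) < s^2 := by positivity
  have hfin : c ^ (s-1) * t ^ (s-1)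
      - (s-1) * c ^ (s-2) / s^2 * (t ^ (s-1) * t - s * t ^ (s-1))
      ≤ t ^ (s-1) * (c ^ (s-1) * (1 + (s-1) * L)) := by
    have expand : ((s-1) * t ^ (s-1)) * (c ^ (s-2) * ((s - t) / s^2))
        = - ((s-1) * c ^ (s-2) / s^2 * (t ^ (s-1) * t - s * t ^ (s-1))) := by
      field_simp
      ring
    nlinarith [hK2]
  linarith

lemma shift_Ioi (F : ℝ → ℝ) (hF : AEStronglyMeasurable F (volume : Measure ℝ)) :
    ∫ u in Ioi (1:ℝ), F u = ∫ t in Ioi (0:ℝ), F (t + 1) := by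
  have hmap : Measure.map (· + (1:ℝ)) volume = volume := map_add_right_eq_self volume 1
  calc ∫ u in Ioi (1:ℝ), F u
      = ∫ u in Ioi (1:ℝ), F u ∂(Measure.map (· + (1:ℝ)) volume) := by rw [hmap]
    _ = ∫ t in (· + (1:ℝ)) ⁻¹' Ioi 1, F (t + 1) := by
        rw [setIntegral_map measurableSet_Ioi (by rwa [hmap]) (measurable_add_const 1).aemeasurable]
    _ = ∫ t in Ioi (0:ℝ), F (t + 1) := by congr 1; ext x; simp

/-- Lower bound on the upper incomplete gamma function: for `s ≥ 1`,
`∫₁^∞ u^{s−1} e^{−u} du ≥ e^{−1} Γ(s) (1 + 1/s)^{s−1}`. -/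
theorem upper_incomplete_gamma_lower_bound (s : ℝ) (hs : 1 ≤ s) :
    Real.exp (-1) * Real.Gamma s * (1 + 1 / s) ^ (s - 1) ≤
      ∫ u in Ioi (1:ℝ), u ^ (s - 1) * Real.exp (-u) := by
  have hs0 : (0:ℝ) < s := by linarith
  set c := 1 + 1/s with hc_def
  set D := (s-1) * c^(s-2) / s^2 with hD_def
  -- integrability of the gamma integrands
  have hGam : IntegrableOn (fun x : ℝ => Real.exp (-x) * x ^ (s-1)) (Ioi 0) :=
    Real.GammaIntegral_convergent hs0
  have hGam1 : IntegrableOn (fun x : ℝ => Real.exp (-x) * x ^ s) (Ioi 0) := by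
    have := Real.GammaIntegral_convergent (by linarith : (0:ℝ) < s + 1)
    simpa using this
  -- the tangent-line minorant
  set h : ℝ → ℝ := fun t => (c^(s-1) + D*s) * (Real.exp (-t) * t ^ (s-1))
      - D * (Real.exp (-t) * t ^ s) with hh_def
  have hint : IntegrableOn h (Ioi 0) := (hGam.const_mul _).sub (hGam1.const_mul _)
  have hGamVal : ∫ t in Ioi (0:ℝ), Real.exp (-t) * t ^ (s-1) = Real.Gamma s :=
    (Real.Gamma_eq_integral hs0).symm
  have hGamVal1 : ∫ t in Ioi (0:ℝ), Real.exp (-t) * t ^ s = s * Real.Gamma s := by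
    have h1 : Real.Gamma (s+1) = ∫ t in Ioi (0:ℝ), Real.exp (-t) * t ^ (s+1-1) :=
      Real.Gamma_eq_integral (by linarith)
    rw [Real.Gamma_add_one hs0.ne'] at h1
    simp only [add_sub_cancel_right] at h1
    exact h1.symm
  have hval : ∫ t in Ioi (0:ℝ), h t = c^(s-1) * Real.Gamma s := by
    rw [hh_def]
    rw [integral_sub (hGam.const_mul _) (hGam1.const_mul _),
      integral_const_mul, integral_const_mul, hGamVal, hGamVal1]
    ring
  -- the shifted integrand
  set f : ℝ → ℝ := fun t => (t+1) ^ (s-1) * Real.exp (-t) with hf_def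
  have hf_meas : AEStronglyMeasurable f (volume : Measure ℝ) := by
    apply Measurable.aestronglyMeasurable
    fun_prop
  have hf_int : IntegrableOn f (Ioi 0) := by
    apply Integrable.mono' (g := fun t => (2:ℝ)^(s-1) * (Real.exp (-t) + Real.exp (-t) * t ^ (s-1)))
    · apply Integrable.const_mul
      apply Integrable.add _ hGam
      have := exp_neg_integrableOn_Ioi 0 (zero_lt_one (α := ℝ))
      exact (by simpa using this : IntegrableOn (fun x : ℝ => Real.exp (-x)) (Ioi 0))
    · exact hf_meas.restrict
    · rw [ae_restrict_iff' measurableSet_Ioi]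
      refine ae_of_all _ fun t ht => ?_
      simp only [mem_Ioi] at ht
      have hexp : (0:ℝ) < Real.exp (-t) := Real.exp_pos _
      have hb : (t+1)^(s-1) ≤ (2:ℝ)^(s-1) * (1 + t ^ (s-1)) := by
        have h2pos : (0:ℝ) < (2:ℝ)^(s-1) := Real.rpow_pos_of_pos two_pos _
        have htpow : (0:ℝ) ≤ t ^ (s-1) := Real.rpow_nonneg ht.le _
        rcases le_total t 1 with h | h
        · have h1 : (t+1)^(s-1) ≤ (2:ℝ)^(s-1) :=
            Real.rpow_le_rpow (by linarith) (by linarith) (by linarith)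
          nlinarith
        · have h1 : (t+1)^(s-1) ≤ (2*t)^(s-1) :=
            Real.rpow_le_rpow (by linarith) (by linarith) (by linarith)
          rw [Real.mul_rpow (by norm_num) ht.le] at h1
          nlinarith
      have : ‖f t‖ = (t+1)^(s-1) * Real.exp (-t) := by
        rw [hf_def]
        exact abs_of_nonneg (by positivity)
      rw [this]
      nlinarith [mul_le_mul_of_nonneg_right hb hexp.le]
  -- pointwise comparison on Ioi 0
  have hmono : ∫ t in Ioi (0:ℝ), h t ≤ ∫ t in Ioi (0:ℝ), f t := by
    apply setIntegral_mono_on hint hf_int measurableSet_Ioi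
    intro t ht
    simp only [mem_Ioi] at ht
    have hkey := key_pointwise s hs t ht
    have hexp : (0:ℝ) < Real.exp (-t) := Real.exp_pos _
    have := mul_le_mul_of_nonneg_right hkey hexp.le
    rw [hh_def, hf_def]
    simp only [hD_def] at *
    nlinarith [this]
  -- shifting the original integral
  have hshift : ∫ u in Ioi (1:ℝ), u ^ (s-1) * Real.exp (-u)
      = ∫ t in Ioi (0:ℝ), (t+1) ^ (s-1) * Real.exp (-(t+1)) := by
    apply shift_Ioi (fun u => u ^ (s-1) * Real.exp (-u))
    apply Measurable.aestronglyMeasurable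
    fun_prop
  have hconst : ∫ t in Ioi (0:ℝ), (t+1) ^ (s-1) * Real.exp (-(t+1))
      = Real.exp (-1) * ∫ t in Ioi (0:ℝ), f t := by
    rw [← integral_const_mul]
    apply setIntegral_congr_fun measurableSet_Ioi
    intro t _
    rw [hf_def]
    simp only
    rw [show -(t+1) = -t + -1 by ring, Real.exp_add]
    ring
  rw [hshift, hconst]
  have := mul_le_mul_of_nonneg_left hmono (Real.exp_pos (-1)).le
  calc Real.exp (-1) * Real.Gamma s * c ^ (s-1)
      = Real.exp (-1) * ∫ t in Ioi (0:ℝ), h t := by rw [hval]; ring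
    _ ≤ Real.exp (-1) * ∫ t in Ioi (0:ℝ), f t := this
end
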